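/- Assume ‖X‖ has regularly varying tail with index α > 0, EX = 0 (Bochner sense) whenever E‖X‖ < ∞, and condition (2.4) holds when α > 1. Then for every γ ∈ (0,1) with γ > max(0, 1/2 − 1/α), n^{1−γ} ‖X̄_n‖ / a_n → 0 in probability as n → ∞, where X̄_n = S_n/n. -/

import Mathlib

open MeasureTheory ProbabilityTheory Filter Set


/-- Dyadic iteration: lower polynomial bound for an antitone positive function whose
value at `2*x` is at least `2^(-p)` times its value at `x`, for `x ≥ M`. -/
lemma dyadic_lower_aux {T : ℝ → ℝ} {M p : ℝ} (hM : 1 ≤ M) (hp : 0 < p)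
    (hanti : Antitone T) (hTpos : ∀ x, 0 < T x)
    (hstep : ∀ x, M ≤ x → 2 ^ (-p) * T x ≤ T (2 * x)) :
    ∀ x, M ≤ x → (T M * (2 / M) ^ (-p)) * x ^ (-p) ≤ T x := by
  have hM0 : (0:ℝ) < M := lt_of_lt_of_le one_pos hM
  have hiter : ∀ k : ℕ, ((2:ℝ) ^ (k:ℝ)) ^ (-p) * T M ≤ T (2 ^ k * M) := by
    intro k
    induction k with
    | zero => simp
    | succ k ih =>
      have h2k : (0:ℝ) < 2 ^ k * M := by positivity
      have := hstep (2 ^ k * M) (le_mul_of_one_le_left hM0.le (one_le_pow₀ (by norm_num)))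
      calc ((2:ℝ) ^ ((k+1:ℕ):ℝ)) ^ (-p) * T M
          = 2 ^ (-p) * (((2:ℝ) ^ (k:ℝ)) ^ (-p) * T M) := by
            rw [← Real.rpow_mul (by norm_num), ← Real.rpow_mul (by norm_num),
              ← mul_assoc, ← Real.rpow_add (by norm_num)]
            push_cast
            ring_nf
        _ ≤ 2 ^ (-p) * T (2 ^ k * M) := by
            have h2 : (0:ℝ) < 2 ^ (-p:ℝ) := Real.rpow_pos_of_pos (by norm_num) _
            exact mul_le_mul_of_nonneg_left ih h2.le
        _ ≤ T (2 ^ (k+1) * M) := by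
            have : (2:ℝ) ^ (k+1) * M = 2 * (2 ^ k * M) := by ring
            rw [this]; exact hstep (2 ^ k * M) (le_mul_of_one_le_left hM0.le (one_le_pow₀ (by norm_num : (1:ℝ) ≤ 2)))
  intro x hx
  have hx0 : (0:ℝ) < x := lt_of_lt_of_le hM0 hx
  set u : ℝ := Real.logb 2 (x / M) with hu
  have hu0 : 0 ≤ u := Real.logb_nonneg one_lt_two ((one_le_div hM0).2 hx)
  set k : ℕ := ⌈u⌉₊ with hk
  have h2u : (2:ℝ) ^ u = x / M := Real.rpow_logb (by norm_num) (by norm_num) (by positivity)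
  have hxle : x ≤ 2 ^ k * M := by
    have : (2:ℝ) ^ u ≤ 2 ^ (k:ℝ) :=
      Real.rpow_le_rpow_of_exponent_le one_le_two (Nat.le_ceil u)
    rw [h2u] at this
    rw [Real.rpow_natCast] at this
    calc x = x / M * M := by field_simp
    _ ≤ 2 ^ k * M := mul_le_mul_of_nonneg_right this hM0.le
  have hkle : (2:ℝ) ^ (k:ℝ) ≤ 2 * x / M := by
    have : (k:ℝ) ≤ u + 1 := (Nat.ceil_lt_add_one hu0).le
    calc (2:ℝ) ^ (k:ℝ) ≤ 2 ^ (u+1) := Real.rpow_le_rpow_of_exponent_le one_le_two this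
    _ = 2 * x / M := by rw [Real.rpow_add (by norm_num), h2u]; ring
  calc (T M * (2 / M) ^ (-p)) * x ^ (-p) = (2 * x / M) ^ (-p) * T M := by
        have h1 : 2 * x / M = (2 / M) * x := by ring
        rw [h1, Real.mul_rpow (by positivity) hx0.le]
        ring
    _ ≤ ((2:ℝ) ^ (k:ℝ)) ^ (-p) * T M := by
        apply mul_le_mul_of_nonneg_right _ (hTpos M).le
        exact Real.rpow_le_rpow_of_nonpos (by positivity) hkle (neg_nonpos.2 hp.le)
    _ ≤ T (2 ^ k * M) := hiter k
    _ ≤ T x := hanti hxle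


lemma dyadic_upper_aux {T : ℝ → ℝ} {M q : ℝ} (hM : 1 ≤ M) (hq : 0 < q)
    (hanti : Antitone T) (hTpos : ∀ x, 0 < T x)
    (hstep : ∀ x, M ≤ x → T (2 * x) ≤ 2 ^ (-q) * T x) :
    ∀ x, M ≤ x → T x ≤ (T M * (2 * M) ^ q) * x ^ (-q) := by
  have hM0 : (0:ℝ) < M := lt_of_lt_of_le one_pos hM
  have hiter : ∀ k : ℕ, T (2 ^ k * M) ≤ ((2:ℝ) ^ (k:ℝ)) ^ (-q) * T M := by
    intro k
    induction k with
    | zero => simp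
    | succ k ih =>
      have hMle : M ≤ 2 ^ k * M := le_mul_of_one_le_left hM0.le (one_le_pow₀ (by norm_num))
      calc T (2 ^ (k+1) * M) = T (2 * (2 ^ k * M)) := by ring_nf
        _ ≤ 2 ^ (-q) * T (2 ^ k * M) := hstep _ hMle
        _ ≤ 2 ^ (-q) * (((2:ℝ) ^ (k:ℝ)) ^ (-q) * T M) :=
            mul_le_mul_of_nonneg_left ih (Real.rpow_pos_of_pos (by norm_num) _).le
        _ = ((2:ℝ) ^ ((k+1:ℕ):ℝ)) ^ (-q) * T M := by
            rw [← Real.rpow_mul (by norm_num), ← Real.rpow_mul (by norm_num),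
              ← mul_assoc, ← Real.rpow_add (by norm_num)]
            push_cast
            ring_nf
  intro x hx
  have hx0 : (0:ℝ) < x := lt_of_lt_of_le hM0 hx
  set u : ℝ := Real.logb 2 (x / M) with hu
  have hu0 : 0 ≤ u := Real.logb_nonneg one_lt_two ((one_le_div hM0).2 hx)
  set k : ℕ := ⌊u⌋₊ with hk
  have h2u : (2:ℝ) ^ u = x / M := Real.rpow_logb (by norm_num) (by norm_num) (by positivity)
  have hlex : 2 ^ k * M ≤ x := by
    have : (2:ℝ) ^ (k:ℝ) ≤ 2 ^ u :=
      Real.rpow_le_rpow_of_exponent_le one_le_two (Nat.floor_le hu0)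
    rw [h2u, Real.rpow_natCast] at this
    calc (2:ℝ) ^ k * M ≤ x / M * M := mul_le_mul_of_nonneg_right this hM0.le
    _ = x := by field_simp
  have hkge : x / (2 * M) ≤ (2:ℝ) ^ (k:ℝ) := by
    have h1 : u ≤ (k:ℝ) + 1 := by
      have := Nat.lt_floor_add_one u
      push_cast at this ⊢
      linarith
    have : (2:ℝ) ^ u ≤ 2 ^ ((k:ℝ) + 1) := Real.rpow_le_rpow_of_exponent_le one_le_two h1
    rw [h2u, Real.rpow_add (by norm_num), Real.rpow_one] at this
    calc x / (2 * M) = (x / M) / 2 := by ring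
    _ ≤ (2 ^ (k:ℝ) * 2) / 2 := by linarith
    _ = 2 ^ (k:ℝ) := by ring
  calc T x ≤ T (2 ^ k * M) := hanti hlex
    _ ≤ ((2:ℝ) ^ (k:ℝ)) ^ (-q) * T M := hiter k
    _ ≤ (x / (2 * M)) ^ (-q) * T M := by
        apply mul_le_mul_of_nonneg_right _ (hTpos M).le
        exact Real.rpow_le_rpow_of_nonpos (by positivity) hkge (neg_nonpos.2 hq.le)
    _ = (T M * (2 * M) ^ q) * x ^ (-q) := by
        have h1 : x / (2 * M) = x * (2 * M)⁻¹ := by ring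
        rw [h1, Real.mul_rpow hx0.le (by positivity),
          Real.inv_rpow (by positivity), ← Real.rpow_neg (by positivity), neg_neg]
        ring

lemma tail_poly_lower {T : ℝ → ℝ} {α δ : ℝ} (hα : 0 < α) (hδ : 0 < δ)
    (hTpos : ∀ x, 0 < T x) (hanti : Antitone T)
    (hlim : Tendsto (fun x => T (2*x)/T x) atTop (nhds ((2:ℝ) ^ (-α)))) :
    ∃ c > 0, ∃ M ≥ (1:ℝ), ∀ x, M ≤ x → c * x ^ (-(α+δ)) ≤ T x := by
  have hlt : (2:ℝ) ^ (-(α+δ)) < 2 ^ (-α) :=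
    Real.rpow_lt_rpow_of_exponent_lt one_lt_two (by linarith)
  have hev : ∀ᶠ x in atTop, (2:ℝ) ^ (-(α+δ)) < T (2*x)/T x :=
    hlim.eventually (eventually_gt_nhds hlt)
  obtain ⟨M0, hM0⟩ := hev.exists_forall_of_atTop
  set M := max M0 1 with hM
  have hM1 : (1:ℝ) ≤ M := le_max_right _ _
  have hstep : ∀ x, M ≤ x → 2 ^ (-(α+δ)) * T x ≤ T (2 * x) := by
    intro x hx
    have := hM0 x (le_trans (le_max_left _ _) hx)
    exact ((lt_div_iff₀ (hTpos x)).1 this).le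
  have key := dyadic_lower_aux hM1 (by linarith : (0:ℝ) < α + δ) hanti hTpos hstep
  refine ⟨T M * (2 / M) ^ (-(α+δ)), ?_, M, hM1, key⟩
  have h2M : (0:ℝ) < 2 / M := by positivity
  exact mul_pos (hTpos M) (Real.rpow_pos_of_pos h2M _)

lemma tail_poly_upper {T : ℝ → ℝ} {α δ : ℝ} (hα : 0 < α) (hδ : 0 < δ) (hδα : δ < α)
    (hTpos : ∀ x, 0 < T x) (hanti : Antitone T)
    (hlim : Tendsto (fun x => T (2*x)/T x) atTop (nhds ((2:ℝ) ^ (-α)))) :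
    ∃ C > 0, ∃ M ≥ (1:ℝ), ∀ x, M ≤ x → T x ≤ C * x ^ (-(α-δ)) := by
  have hlt : (2:ℝ) ^ (-α) < 2 ^ (-(α-δ)) :=
    Real.rpow_lt_rpow_of_exponent_lt one_lt_two (by linarith)
  have hev : ∀ᶠ x in atTop, T (2*x)/T x < (2:ℝ) ^ (-(α-δ)) :=
    hlim.eventually (eventually_lt_nhds hlt)
  obtain ⟨M0, hM0⟩ := hev.exists_forall_of_atTop
  set M := max M0 1 with hM
  have hM1 : (1:ℝ) ≤ M := le_max_right _ _
  have hstep : ∀ x, M ≤ x → T (2 * x) ≤ 2 ^ (-(α-δ)) * T x := by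
    intro x hx
    have := hM0 x (le_trans (le_max_left _ _) hx)
    exact ((div_lt_iff₀ (hTpos x)).1 this).le
  have key := dyadic_upper_aux hM1 (by linarith : (0:ℝ) < α - δ) hanti hTpos hstep
  refine ⟨T M * (2 * M) ^ (α-δ), ?_, M, hM1, key⟩
  have h2M : (0:ℝ) < 2 * M := by linarith
  exact mul_pos (hTpos M) (Real.rpow_pos_of_pos h2M _)
lemma tendsto_const_mul_nat_rpow_neg (K e : ℝ) (he : 0 < e) :
    Tendsto (fun n : ℕ => K * (n:ℝ) ^ (-e)) atTop (nhds 0) := by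
  have h1 : Tendsto (fun n : ℕ => (n:ℝ) ^ (-e)) atTop (nhds 0) :=
    (tendsto_rpow_neg_atTop he).comp tendsto_natCast_atTop_atTop
  simpa using h1.const_mul K

set_option maxHeartbeats 2000000 in
theorem stmt12
    {B : Type*} [NormedAddCommGroup B] [NormedSpace ℝ B] [CompleteSpace B]
    [SecondCountableTopology B] [MeasurableSpace B] [BorelSpace B]
    {Ω : Type*} [MeasurableSpace Ω] (P : Measure Ω) [IsProbabilityMeasure P]
    (X : ℕ → Ω → B) (hmeas : ∀ i, Measurable (X i))
    (hindep : iIndepFun X P)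
    (hident : ∀ i, P.map (X i) = P.map (X 0))
    (S : ℕ → Ω → B) (hS : ∀ n ω, S n ω = ∑ i ∈ Finset.range n, X i ω)
    (α : ℝ) (hα : 0 < α)
    (htailpos : ∀ x : ℝ, 0 < (P {ω | ‖X 0 ω‖ > x}).toReal)
    (hrv : ∀ t : ℝ, 0 < t → Tendsto (fun x : ℝ =>
        (P {ω | ‖X 0 ω‖ > t * x}).toReal / (P {ω | ‖X 0 ω‖ > x}).toReal)
        atTop (nhds (t ^ (-α))))
    (a : ℕ → ℝ)
    (ha : ∀ n : ℕ, a n =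
      sInf {x : ℝ | 0 ≤ x ∧ 1 - 1 / (n : ℝ) ≤ (P {ω | ‖X 0 ω‖ ≤ x}).toReal})
    (hmean : Integrable (X 0) P → ∫ ω, X 0 ω ∂P = 0)
    (hcond1 : 2 < α → ∃ C : ℝ, ∀ n : ℕ, 1 ≤ n →
      ∫ ω, ‖((n : ℝ) ^ (-(1 / 2 : ℝ))) • S n ω‖ ∂P ≤ C)
    (hcond2 : 1 < α → α ≤ 2 → ∀ β : ℝ, 0 < β → β < α → ∃ C : ℝ, ∀ n : ℕ, 1 ≤ n →
      ∫ ω, ‖((n : ℝ) ^ (-(1 / β))) • S n ω‖ ∂P ≤ C)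
    (γ : ℝ) (hγ0 : 0 < γ) (hγ1 : γ < 1) (hγ : max 0 (1 / 2 - 1 / α) < γ)
    (ε : ℝ) (hε : 0 < ε) :
    Tendsto (fun n : ℕ =>
        (P {ω | ε < (n : ℝ) ^ (1 - γ) * ‖(n : ℝ)⁻¹ • S n ω‖ / a n}).toReal)
      atTop (nhds 0) := by
  -- abbreviation for the tail function
  set T : ℝ → ℝ := fun x => (P {ω | ‖X 0 ω‖ > x}).toReal with hTdef
  have hTpos : ∀ x, 0 < T x := htailpos
  have hanti : Antitone T := by
    intro x y hxy
    exact ENNReal.toReal_mono (measure_ne_top _ _)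
      (measure_mono (fun ω h => lt_of_le_of_lt hxy h))
  have hlim : Tendsto (fun x => T (2*x) / T x) atTop (nhds ((2:ℝ) ^ (-α))) := hrv 2 two_pos
  -- identical tails
  have hPXi : ∀ (i : ℕ) (t : ℝ), P {ω | t < ‖X i ω‖} = P {ω | t < ‖X 0 ω‖} := by
    intro i t
    have hs : MeasurableSet {y : B | t < ‖y‖} :=
      measurableSet_lt measurable_const measurable_norm
    have h1 : {ω | t < ‖X i ω‖} = X i ⁻¹' {y | t < ‖y‖} := rfl
    have h2 : {ω | t < ‖X 0 ω‖} = X 0 ⁻¹' {y | t < ‖y‖} := rfl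
    rw [h1, h2, ← Measure.map_apply (hmeas i) hs, ← Measure.map_apply (hmeas 0) hs, hident i]
  have hofT : ∀ x : ℝ, P {ω | x < ‖X 0 ω‖} = ENNReal.ofReal (T x) :=
    fun x => (ENNReal.ofReal_toReal (measure_ne_top P _)).symm
  -- cdf in terms of tail
  have hF : ∀ x : ℝ, (P {ω | ‖X 0 ω‖ ≤ x}).toReal = 1 - T x := by
    intro x
    have hs : MeasurableSet {ω | x < ‖X 0 ω‖} :=
      measurableSet_lt measurable_const (hmeas 0).norm
    have hc : {ω | ‖X 0 ω‖ ≤ x} = {ω | x < ‖X 0 ω‖}ᶜ := by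
      ext ω; simp [Set.mem_setOf_eq, not_lt]
    rw [hc, measure_compl hs (measure_ne_top _ _), measure_univ,
      ENNReal.toReal_sub_of_le prob_le_one ENNReal.one_ne_top, ENNReal.toReal_one]
  -- tail tends to zero
  have hTto0 : Tendsto T atTop (nhds 0) := by
    obtain ⟨C, hC, M, hM1, hub⟩ := tail_poly_upper hα (half_pos hα)
      (by linarith : α/2 < α) hTpos hanti hlim
    apply squeeze_zero' (Filter.eventually_atTop.2 ⟨M, fun x _ => (hTpos x).le⟩)
      (Filter.eventually_atTop.2 ⟨M, fun x hx => hub x hx⟩)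
    have : α - α/2 = α/2 := by ring
    rw [this]
    simpa using (tendsto_rpow_neg_atTop (half_pos hα)).const_mul C
  -- lower bound on the quantile sequence
  have haLB : ∀ ρ : ℝ, 0 < ρ → ρ * α < 1 → ∀ᶠ n : ℕ in atTop, (n:ℝ) ^ ρ ≤ a n := by
    intro ρ hρ hρα
    set δ' : ℝ := (1/ρ - α)/2 with hδ'def
    have hαρ : α < 1/ρ := by
      rw [lt_div_iff₀ hρ]; linarith [mul_comm ρ α]
    have hδ' : 0 < δ' := by simp only [hδ'def]; linarith
    have hw : ρ * (α + δ') < 1 := by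
      have : α + δ' < 1/ρ := by simp only [hδ'def]; linarith
      calc ρ * (α + δ') < ρ * (1/ρ) := by exact mul_lt_mul_of_pos_left this hρ
      _ = 1 := by field_simp
    obtain ⟨c, hc, M, hM1, hlb⟩ := tail_poly_lower hα hδ' hTpos hanti hlim
    have hEv1 : ∀ᶠ n : ℕ in atTop, M ≤ (n:ℝ) ^ ρ :=
      ((tendsto_rpow_atTop hρ).comp tendsto_natCast_atTop_atTop).eventually_ge_atTop M
    have hEv2 : ∀ᶠ n : ℕ in atTop, 1 < c * (n:ℝ) ^ (1 - ρ * (α + δ')) := by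
      have h1 : Tendsto (fun n : ℕ => c * (n:ℝ) ^ (1 - ρ * (α + δ'))) atTop atTop :=
        ((tendsto_rpow_atTop (by linarith)).comp
          tendsto_natCast_atTop_atTop).const_mul_atTop hc
      exact h1.eventually_gt_atTop 1
    filter_upwards [hEv1, hEv2, Filter.eventually_ge_atTop 1] with n h1 h2 h3
    have hn1 : (1:ℝ) ≤ (n:ℝ) := by exact_mod_cast h3
    have hn0 : (0:ℝ) < (n:ℝ) := by linarith
    -- T ((n:ℝ)^ρ) > 1/n
    have hkey : 1 / (n:ℝ) < T ((n:ℝ) ^ ρ) := by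
      have hb := hlb ((n:ℝ) ^ ρ) h1
      have heq : ((n:ℝ) ^ ρ) ^ (-(α + δ')) = (n:ℝ) ^ (-(ρ * (α + δ'))) := by
        rw [← Real.rpow_mul hn0.le]; ring_nf
      have h4 : 1 / (n:ℝ) < c * (n:ℝ) ^ (-(ρ * (α + δ'))) := by
        have h5 : (n:ℝ) * (n:ℝ) ^ (-(ρ * (α + δ'))) = (n:ℝ) ^ (1 - ρ * (α + δ')) := by
          nth_rewrite 1 [← Real.rpow_one (n:ℝ)]
          rw [← Real.rpow_add hn0]
          ring_nf
        rw [← h5, ← mul_assoc] at h2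
        rw [div_lt_iff₀ hn0]
        calc 1 < c * (n:ℝ) * (n:ℝ) ^ (-(ρ * (α + δ'))) := h2
        _ = c * (n:ℝ) ^ (-(ρ * (α + δ'))) * (n:ℝ) := by ring
      calc 1 / (n:ℝ) < c * (n:ℝ) ^ (-(ρ * (α + δ'))) := h4
      _ = c * ((n:ℝ) ^ ρ) ^ (-(α + δ')) := by rw [heq]
      _ ≤ T ((n:ℝ) ^ ρ) := hb
    -- the quantile set
    rw [ha n]
    have hne : ∃ x : ℝ, x ∈ {x : ℝ | 0 ≤ x ∧ 1 - 1 / (n:ℝ) ≤ (P {ω | ‖X 0 ω‖ ≤ x}).toReal} := by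
      have : ∀ᶠ x in atTop, T x < 1 / (n:ℝ) :=
        hTto0.eventually (eventually_lt_nhds (by positivity))
      obtain ⟨x0, hx0⟩ := this.exists_forall_of_atTop
      refine ⟨max x0 0, le_max_right _ _, ?_⟩
      rw [hF]
      have := hx0 (max x0 0) (le_max_left _ _)
      linarith
    apply le_csInf hne
    rintro x ⟨hx0, hx1⟩
    rw [hF] at hx1
    by_contra hcon
    push_neg at hcon
    have := hanti hcon.le
    linarith
  -- inclusion of the event into a norm-tail event
  have hsub : ∀ n : ℕ, 1 ≤ n → 0 < a n →
      {ω | ε < (n:ℝ) ^ (1-γ) * ‖(n:ℝ)⁻¹ • S n ω‖ / a n} ⊆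
      {ω | ε * (n:ℝ) ^ γ * a n < ‖S n ω‖} := by
    intro n hn han ω hω
    simp only [Set.mem_setOf_eq] at hω ⊢
    have hn0 : (0:ℝ) < (n:ℝ) := by exact_mod_cast hn
    rw [norm_smul, norm_inv, Real.norm_natCast] at hω
    rw [lt_div_iff₀ han] at hω
    have h1 : (n:ℝ) ^ (1-γ) * ((n:ℝ)⁻¹ * ‖S n ω‖) = (n:ℝ) ^ (-γ) * ‖S n ω‖ := by
      rw [← Real.rpow_neg_one (n:ℝ), ← mul_assoc, ← Real.rpow_add hn0]
      ring_nf
    rw [h1] at hω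
    have h2 : (0:ℝ) < (n:ℝ) ^ γ := Real.rpow_pos_of_pos hn0 γ
    have h3 : (n:ℝ) ^ γ * (n:ℝ) ^ (-γ) = 1 := by
      rw [← Real.rpow_add hn0]; simp
    have := mul_lt_mul_of_pos_left hω h2
    calc ε * (n:ℝ) ^ γ * a n = (n:ℝ) ^ γ * (ε * a n) := by ring
    _ < (n:ℝ) ^ γ * ((n:ℝ) ^ (-γ) * ‖S n ω‖) := this
    _ = ((n:ℝ) ^ γ * (n:ℝ) ^ (-γ)) * ‖S n ω‖ := by ring
    _ = ‖S n ω‖ := by rw [h3]; ring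
  -- Markov inequality in ℝ≥0∞ form
  have markov : ∀ (W : Ω → B), Measurable W → ∀ τ : ℝ, 0 < τ →
      P {ω | τ < ‖W ω‖} ≤ (∫⁻ ω, ENNReal.ofReal ‖W ω‖ ∂P) / ENNReal.ofReal τ := by
    intro W hW τ hτ
    have h1 : {ω | τ < ‖W ω‖} ⊆ {ω | ENNReal.ofReal τ ≤ ENNReal.ofReal ‖W ω‖} :=
      fun ω h => ENNReal.ofReal_le_ofReal h.le
    exact (measure_mono h1).trans
      (meas_ge_le_lintegral_div (ENNReal.measurable_ofReal.comp hW.norm).aemeasurable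
        (ENNReal.ofReal_pos.2 hτ).ne' ENNReal.ofReal_ne_top)
  have hSmeas : ∀ n, Measurable (S n) := by
    intro n
    have : S n = fun ω => ∑ i ∈ Finset.range n, X i ω := funext (hS n)
    rw [this]
    exact Finset.measurable_sum _ (fun i _ => hmeas i)
  -- It suffices to dominate by a power decay
  suffices H : ∃ (K κ : ℝ), 0 ≤ K ∧ 0 < κ ∧ ∀ᶠ n : ℕ in atTop,
      (P {ω | ε < (n:ℝ) ^ (1-γ) * ‖(n:ℝ)⁻¹ • S n ω‖ / a n}).toReal ≤ K * (n:ℝ) ^ (-κ) by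
    obtain ⟨K, κ, hK, hκ, hev⟩ := H
    exact squeeze_zero' (Filter.Eventually.of_forall (fun n => ENNReal.toReal_nonneg)) hev
      (tendsto_const_mul_nat_rpow_neg K κ hκ)
  rcases le_or_gt α 1 with hα1 | hα1
  · -- case 0 < α ≤ 1 : truncation
    -- choice of exponents
    have h1α : (1:ℝ) ≤ 1/α := by
      rw [le_div_iff₀ hα]; linarith
    set L : ℝ := max (1-γ) (1/α - γ) with hLdef
    have hL1 : L < 1/α := by
      apply max_lt
      · linarith
      · linarith
    have hLpos : 0 < L := lt_of_lt_of_le (by linarith : (0:ℝ) < 1-γ) (le_max_left _ _)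
    set ρ : ℝ := (L + 1/α)/2 with hρdef
    have hρpos : 0 < ρ := by simp only [hρdef]; linarith
    have hρL : L < ρ := by simp only [hρdef]; linarith
    have hρ1α : ρ < 1/α := by simp only [hρdef]; linarith
    have hρα : ρ * α < 1 := by
      have := mul_lt_mul_of_pos_right hρ1α hα
      rwa [one_div, inv_mul_cancel₀ hα.ne'] at this
    have hγρ1 : 1 < γ + ρ := by
      have := le_max_left (1-γ) (1/α - γ)
      have hLa : 1 - γ ≤ L := this
      linarith
    have hγρα : 1 < (γ + ρ) * α := by
      have hLb : 1/α - γ ≤ L := le_max_right _ _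
      have h2 : 1/α < γ + ρ := by linarith
      have := mul_lt_mul_of_pos_right h2 hα
      rwa [one_div, inv_mul_cancel₀ hα.ne'] at this
    have hγρpos : 0 < γ + ρ := by linarith
    set δ : ℝ := min (α/2) (((γ+ρ)*α - 1)/(2*(γ+ρ))) with hδdef
    have hδpos : 0 < δ := by
      apply lt_min (half_pos hα)
      apply div_pos (by linarith) (by linarith)
    have hδα : δ < α := lt_of_le_of_lt (min_le_left _ _) (by linarith)
    -- tail upper bound
    obtain ⟨C, hCpos, M, hM1, hub⟩ := tail_poly_upper hα hδpos hδα hTpos hanti hlim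
    set q : ℝ := α - δ with hqdef
    have hq0 : 0 < q := by simp only [hqdef]; linarith
    have hq1 : q < 1 := by simp only [hqdef]; linarith
    have hqκ : 1 < (γ + ρ) * q := by
      have h3 : δ ≤ ((γ+ρ)*α - 1)/(2*(γ+ρ)) := min_le_right _ _
      have h4 : (γ+ρ) * δ ≤ ((γ+ρ)*α - 1)/2 := by
        rw [le_div_iff₀ (by linarith : (0:ℝ) < 2*(γ+ρ))] at h3
        calc (γ+ρ) * δ = δ * (2*(γ+ρ)) / 2 := by ring
        _ ≤ (((γ+ρ)*α - 1)) / 2 := by linarith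
      have h5 : (γ+ρ) * q = (γ+ρ)*α - (γ+ρ)*δ := by simp only [hqdef]; ring
      linarith
    have hM0 : (0:ℝ) < M := lt_of_lt_of_le one_pos hM1
    -- truncation function
    set g : ℝ → B → B := fun τ y => if ‖y‖ ≤ τ then y else 0 with hgdef
    have hgmeas : ∀ τ : ℝ, Measurable (g τ) := fun τ =>
      Measurable.ite (measurableSet_le measurable_norm measurable_const)
        measurable_id measurable_const
    have hgnorm : ∀ (τ : ℝ) (y : B), ‖g τ y‖ ≤ ‖y‖ := by
      intro τ y
      simp only [hgdef]
      split
      · exact le_rfl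
      · simp
    have hgbdd : ∀ (τ : ℝ), 0 ≤ τ → ∀ (y : B), ‖g τ y‖ ≤ τ := by
      intro τ hτ y
      simp only [hgdef]
      split
      · assumption
      · simpa
    -- identical distribution of truncated norms
    have htrunci : ∀ (τ : ℝ) (i : ℕ),
        ∫⁻ ω, ENNReal.ofReal ‖g τ (X i ω)‖ ∂P = ∫⁻ ω, ENNReal.ofReal ‖g τ (X 0 ω)‖ ∂P := by
      intro τ i
      have hfm : Measurable (fun y : B => ENNReal.ofReal ‖g τ y‖) :=
        ENNReal.measurable_ofReal.comp (hgmeas τ).norm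
      calc ∫⁻ ω, ENNReal.ofReal ‖g τ (X i ω)‖ ∂P
          = ∫⁻ y, ENNReal.ofReal ‖g τ y‖ ∂(P.map (X i)) := (lintegral_map hfm (hmeas i)).symm
      _ = ∫⁻ y, ENNReal.ofReal ‖g τ y‖ ∂(P.map (X 0)) := by rw [hident i]
      _ = ∫⁻ ω, ENNReal.ofReal ‖g τ (X 0 ω)‖ ∂P := lintegral_map hfm (hmeas 0)
    -- truncated mean bound
    have htruncmean : ∀ τ : ℝ, M ≤ τ →
        ∫⁻ ω, ENNReal.ofReal ‖g τ (X 0 ω)‖ ∂P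
          ≤ ENNReal.ofReal (M + C/(1-q) * τ ^ (1-q)) := by
      intro τ hτM
      have hτ0 : (0:ℝ) < τ := lt_of_lt_of_le hM0 hτM
      have hWm : Measurable (fun ω => g τ (X 0 ω)) := (hgmeas τ).comp (hmeas 0)
      rw [lintegral_eq_lintegral_meas_lt P
        (Filter.Eventually.of_forall (fun ω => norm_nonneg _))
        hWm.norm.aemeasurable]
      have hsplit : Set.Ioi (0:ℝ) = Set.Ioc 0 τ ∪ Set.Ioi τ :=
        (Set.Ioc_union_Ioi_eq_Ioi hτ0.le).symm
      rw [hsplit, lintegral_union measurableSet_Ioi (Set.Ioc_disjoint_Ioi le_rfl)]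
      have hzero : ∫⁻ t in Set.Ioi τ, P {ω | t < ‖g τ (X 0 ω)‖} = 0 := by
        have hfun : ∀ t ∈ Set.Ioi τ, P {ω | t < ‖g τ (X 0 ω)‖} = (fun _ => (0:ENNReal)) t := by
          intro t ht
          have hemp : {ω | t < ‖g τ (X 0 ω)‖} = ∅ := by
            apply Set.eq_empty_iff_forall_notMem.2
            intro ω hω
            exact absurd hω (not_lt.2 (le_trans (hgbdd τ hτ0.le _) (le_of_lt ht)))
          rw [hemp, measure_empty]
        rw [setLIntegral_congr_fun_ae measurableSet_Ioi (Filter.Eventually.of_forall hfun),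
          lintegral_zero]
      rw [hzero, add_zero]
      have hsplit2 : Set.Ioc (0:ℝ) τ = Set.Ioc 0 M ∪ Set.Ioc M τ :=
        (Set.Ioc_union_Ioc_eq_Ioc hM0.le hτM).symm
      have hmono1 : ∫⁻ t in Set.Ioc (0:ℝ) τ, P {ω | t < ‖g τ (X 0 ω)‖}
          ≤ ∫⁻ t in Set.Ioc (0:ℝ) τ, P {ω | t < ‖X 0 ω‖} :=
        lintegral_mono (fun t => measure_mono (fun ω hω =>
          lt_of_lt_of_le hω (hgnorm τ _)))
      have hpart1 : ∫⁻ t in Set.Ioc (0:ℝ) M, P {ω | t < ‖X 0 ω‖} ≤ ENNReal.ofReal M := by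
        calc ∫⁻ t in Set.Ioc (0:ℝ) M, P {ω | t < ‖X 0 ω‖}
            ≤ ∫⁻ _ in Set.Ioc (0:ℝ) M, 1 := lintegral_mono (fun t => prob_le_one)
        _ = ENNReal.ofReal M := by rw [setLIntegral_one, Real.volume_Ioc, sub_zero]
      have hpart2 : ∫⁻ t in Set.Ioc M τ, P {ω | t < ‖X 0 ω‖}
          ≤ ENNReal.ofReal (C/(1-q) * τ ^ (1-q)) := by
        have hm : Measurable (fun t : ℝ => t ^ (-q)) := measurable_id'.pow_const (-q)
        have hIcc : IntegrableOn (fun t : ℝ => C * t ^ (-q)) (Set.Ioc M τ) := by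
          have := (intervalIntegral.intervalIntegrable_rpow'
            (by linarith : (-1:ℝ) < -q) (a := M) (b := τ)).const_mul C
          rwa [intervalIntegrable_iff_integrableOn_Ioc_of_le hτM] at this
        calc ∫⁻ t in Set.Ioc M τ, P {ω | t < ‖X 0 ω‖}
            ≤ ∫⁻ t in Set.Ioc M τ, ENNReal.ofReal (C * t ^ (-q)) := by
              apply setLIntegral_mono (ENNReal.measurable_ofReal.comp (hm.const_mul C))
              intro t ht
              rw [hofT t]
              exact ENNReal.ofReal_le_ofReal (hub t (le_of_lt ht.1))
        _ = ENNReal.ofReal (∫ t in Set.Ioc M τ, C * t ^ (-q)) := by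
              rw [← ofReal_integral_eq_lintegral_ofReal hIcc]
              filter_upwards [self_mem_ae_restrict (measurableSet_Ioc :
                MeasurableSet (Set.Ioc M τ))] with t ht
              have ht0 : (0:ℝ) < t := lt_of_lt_of_le hM0 (le_of_lt ht.1)
              positivity
        _ ≤ ENNReal.ofReal (C/(1-q) * τ ^ (1-q)) := by
              apply ENNReal.ofReal_le_ofReal
              have heval : ∫ t in Set.Ioc M τ, C * t ^ (-q)
                  = C * ((τ ^ (-q+1) - M ^ (-q+1)) / (-q+1)) := by
                rw [← intervalIntegral.integral_of_le hτM,
                  intervalIntegral.integral_const_mul, integral_rpow (Or.inl (by linarith))]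
              rw [heval]
              have hMnn : (0:ℝ) ≤ M ^ (-q+1) := Real.rpow_nonneg hM0.le _
              have hq1' : (0:ℝ) < -q+1 := by linarith
              have hd : (τ ^ (-q+1) - M ^ (-q+1)) / (-q+1) ≤ τ ^ (-q+1) / (-q+1) := by
                gcongr
                linarith
              calc C * ((τ ^ (-q+1) - M ^ (-q+1)) / (-q+1))
                  ≤ C * (τ ^ (-q+1) / (-q+1)) := mul_le_mul_of_nonneg_left hd hCpos.le
              _ = C/(1-q) * τ ^ (1-q) := by rw [show -q+1 = 1-q by ring]; ring
      calc ∫⁻ t in Set.Ioc (0:ℝ) τ, P {ω | t < ‖g τ (X 0 ω)‖}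
          ≤ ∫⁻ t in Set.Ioc (0:ℝ) τ, P {ω | t < ‖X 0 ω‖} := hmono1
      _ = (∫⁻ t in Set.Ioc (0:ℝ) M, P {ω | t < ‖X 0 ω‖})
            + ∫⁻ t in Set.Ioc M τ, P {ω | t < ‖X 0 ω‖} := by
          rw [hsplit2, lintegral_union measurableSet_Ioc (Set.Ioc_disjoint_Ioc_of_le le_rfl)]
      _ ≤ ENNReal.ofReal M + ENNReal.ofReal (C/(1-q) * τ ^ (1-q)) := add_le_add hpart1 hpart2
      _ = ENNReal.ofReal (M + C/(1-q) * τ ^ (1-q)) := by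
          have hτq : (0:ℝ) ≤ τ ^ (1-q) := Real.rpow_nonneg hτ0.le _
          rw [← ENNReal.ofReal_add hM0.le
            (mul_nonneg (div_nonneg hCpos.le (by linarith)) hτq)]
    -- final exponents and constant
    set e1 : ℝ := (γ+ρ)*q - 1 with he1
    set e2 : ℝ := γ+ρ-1 with he2
    have he1p : 0 < e1 := by simp only [he1]; linarith
    have he2p : 0 < e2 := by simp only [he2]; linarith
    set κ : ℝ := min e1 e2 with hκdef
    have hκp : 0 < κ := lt_min he1p he2p
    have hq1' : (0:ℝ) < 1 - q := by linarith
    have hεq : (0:ℝ) ≤ ε^(-q) := Real.rpow_nonneg hε.le _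
    have hCq : (0:ℝ) ≤ C/(1-q) := div_nonneg hCpos.le hq1'.le
    set K : ℝ := (C + C/(1-q)) * ε^(-q) + M/ε with hKdef
    have hKnn : 0 ≤ K := by
      apply add_nonneg (mul_nonneg (by linarith) hεq) (div_nonneg hM0.le hε.le)
    refine ⟨K, κ, hKnn, hκp, ?_⟩
    have hEvM : ∀ᶠ n : ℕ in atTop, M ≤ ε * (n:ℝ)^(γ+ρ) :=
      (((tendsto_rpow_atTop hγρpos).comp
        tendsto_natCast_atTop_atTop).const_mul_atTop hε).eventually_ge_atTop M
    filter_upwards [haLB ρ hρpos hρα, Filter.eventually_ge_atTop 1, hEvM] with n hLB hn1 hMn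
    have hn0 : (0:ℝ) < (n:ℝ) := by exact_mod_cast hn1
    have hn1' : (1:ℝ) ≤ (n:ℝ) := by exact_mod_cast hn1
    have hnρ : (0:ℝ) < (n:ℝ)^ρ := Real.rpow_pos_of_pos hn0 _
    have han : 0 < a n := lt_of_lt_of_le hnρ hLB
    set τ : ℝ := ε * (n:ℝ)^γ * a n with hτdef
    have hτLB : ε * (n:ℝ)^(γ+ρ) ≤ τ := by
      rw [Real.rpow_add hn0, hτdef]
      calc ε * ((n:ℝ) ^ γ * (n:ℝ) ^ ρ) ≤ ε * ((n:ℝ) ^ γ * a n) := by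
            apply mul_le_mul_of_nonneg_left _ hε.le
            exact mul_le_mul_of_nonneg_left hLB (Real.rpow_pos_of_pos hn0 γ).le
      _ = ε * (n:ℝ) ^ γ * a n := by ring
    have hτ0p : (0:ℝ) < ε * (n:ℝ)^(γ+ρ) := by
      have := Real.rpow_pos_of_pos hn0 (γ+ρ); positivity
    have hτpos : 0 < τ := lt_of_lt_of_le hτ0p hτLB
    have hτM : M ≤ τ := le_trans hMn hτLB
    -- event inclusion after truncation
    have hincl : {ω | τ < ‖S n ω‖} ⊆
        (⋃ i ∈ Finset.range n, {ω | τ < ‖X i ω‖}) ∪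
        {ω | τ < ‖∑ i ∈ Finset.range n, g τ (X i ω)‖} := by
      intro ω hω
      by_cases hcase : ∀ i ∈ Finset.range n, ‖X i ω‖ ≤ τ
      · right
        have hsum : ∑ i ∈ Finset.range n, g τ (X i ω) = S n ω := by
          rw [hS n ω]
          exact Finset.sum_congr rfl (fun i hi => by
            simp only [hgdef]; rw [if_pos (hcase i hi)])
        simpa only [Set.mem_setOf_eq, hsum] using hω
      · left
        push_neg at hcase
        obtain ⟨i, hi, hXi⟩ := hcase
        exact Set.mem_biUnion hi (by simpa only [Set.mem_setOf_eq] using hXi)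
    have hWmeas : Measurable (fun ω => ∑ i ∈ Finset.range n, g τ (X i ω)) :=
      Finset.measurable_sum _ (fun i _ => (hgmeas τ).comp (hmeas i))
    -- first term bound
    have hterm1 : P (⋃ i ∈ Finset.range n, {ω | τ < ‖X i ω‖})
        ≤ ENNReal.ofReal ((n:ℝ) * (C * τ^(-q))) := by
      calc P (⋃ i ∈ Finset.range n, {ω | τ < ‖X i ω‖})
          ≤ ∑ i ∈ Finset.range n, P {ω | τ < ‖X i ω‖} := measure_biUnion_finset_le _ _
      _ = ∑ _i ∈ Finset.range n, ENNReal.ofReal (T τ) :=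
          Finset.sum_congr rfl (fun i _ => by rw [hPXi i τ, hofT])
      _ = (n : ENNReal) * ENNReal.ofReal (T τ) := by
          rw [Finset.sum_const, Finset.card_range, nsmul_eq_mul]
      _ ≤ (n : ENNReal) * ENNReal.ofReal (C * τ^(-q)) :=
          mul_le_mul_right (ENNReal.ofReal_le_ofReal (hub τ hτM)) _
      _ = ENNReal.ofReal ((n:ℝ) * (C * τ^(-q))) := by
          rw [ENNReal.ofReal_mul hn0.le, ENNReal.ofReal_natCast]
    -- second term bound
    have hterm2 : P {ω | τ < ‖∑ i ∈ Finset.range n, g τ (X i ω)‖}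
        ≤ ENNReal.ofReal ((n:ℝ) * (M + C/(1-q) * τ^(1-q)) / τ) := by
      have hpt : ∫⁻ ω, ENNReal.ofReal ‖∑ i ∈ Finset.range n, g τ (X i ω)‖ ∂P
          ≤ (n : ENNReal) * ∫⁻ ω, ENNReal.ofReal ‖g τ (X 0 ω)‖ ∂P := by
        calc ∫⁻ ω, ENNReal.ofReal ‖∑ i ∈ Finset.range n, g τ (X i ω)‖ ∂P
            ≤ ∫⁻ ω, ∑ i ∈ Finset.range n, ENNReal.ofReal ‖g τ (X i ω)‖ ∂P := by
              apply lintegral_mono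
              intro ω
              calc ENNReal.ofReal ‖∑ i ∈ Finset.range n, g τ (X i ω)‖
                  ≤ ENNReal.ofReal (∑ i ∈ Finset.range n, ‖g τ (X i ω)‖) :=
                    ENNReal.ofReal_le_ofReal (norm_sum_le _ _)
              _ = ∑ i ∈ Finset.range n, ENNReal.ofReal ‖g τ (X i ω)‖ :=
                    ENNReal.ofReal_sum_of_nonneg (fun i _ => norm_nonneg _)
        _ = ∑ i ∈ Finset.range n, ∫⁻ ω, ENNReal.ofReal ‖g τ (X i ω)‖ ∂P :=
              lintegral_finset_sum _ (fun i _ =>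
                ENNReal.measurable_ofReal.comp ((hgmeas τ).comp (hmeas i)).norm)
        _ = ∑ _i ∈ Finset.range n, ∫⁻ ω, ENNReal.ofReal ‖g τ (X 0 ω)‖ ∂P :=
              Finset.sum_congr rfl (fun i _ => htrunci τ i)
        _ = (n : ENNReal) * ∫⁻ ω, ENNReal.ofReal ‖g τ (X 0 ω)‖ ∂P := by
              rw [Finset.sum_const, Finset.card_range, nsmul_eq_mul]
      calc P {ω | τ < ‖∑ i ∈ Finset.range n, g τ (X i ω)‖}
          ≤ (∫⁻ ω, ENNReal.ofReal ‖∑ i ∈ Finset.range n, g τ (X i ω)‖ ∂P) / ENNReal.ofReal τ :=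
            markov _ hWmeas τ hτpos
      _ ≤ ((n : ENNReal) * ∫⁻ ω, ENNReal.ofReal ‖g τ (X 0 ω)‖ ∂P) / ENNReal.ofReal τ :=
            ENNReal.div_le_div_right hpt _
      _ ≤ ((n : ENNReal) * ENNReal.ofReal (M + C/(1-q) * τ^(1-q))) / ENNReal.ofReal τ :=
            ENNReal.div_le_div_right (mul_le_mul_right (htruncmean τ hτM) _) _
      _ = ENNReal.ofReal ((n:ℝ) * (M + C/(1-q) * τ^(1-q))) / ENNReal.ofReal τ := by
            rw [ENNReal.ofReal_mul hn0.le, ENNReal.ofReal_natCast]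
      _ = ENNReal.ofReal ((n:ℝ) * (M + C/(1-q) * τ^(1-q)) / τ) :=
            (ENNReal.ofReal_div_of_pos hτpos).symm
    -- combine
    have hτq1 : (0:ℝ) ≤ τ^(1-q) := Real.rpow_nonneg hτpos.le _
    have hr1nn : (0:ℝ) ≤ (n:ℝ) * (C * τ^(-q)) := by
      have : (0:ℝ) ≤ τ^(-q) := Real.rpow_nonneg hτpos.le _
      positivity
    have hr2nn : (0:ℝ) ≤ (n:ℝ) * (M + C/(1-q) * τ^(1-q)) / τ := by
      apply div_nonneg _ hτpos.le
      apply mul_nonneg hn0.le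
      have := mul_nonneg hCq hτq1
      linarith
    have hcomb : P {ω | ε < (n:ℝ) ^ (1-γ) * ‖(n:ℝ)⁻¹ • S n ω‖ / a n}
        ≤ ENNReal.ofReal ((n:ℝ) * (C * τ^(-q)) + (n:ℝ) * (M + C/(1-q) * τ^(1-q)) / τ) := by
      rw [ENNReal.ofReal_add hr1nn hr2nn]
      exact (measure_mono (hsub n hn1 han)).trans ((measure_mono hincl).trans
        ((measure_union_le _ _).trans (add_le_add hterm1 hterm2)))
    -- real estimates
    have hτq : τ^(-q) ≤ (ε * (n:ℝ)^(γ+ρ))^(-q) :=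
      Real.rpow_le_rpow_of_nonpos hτ0p hτLB (by linarith)
    have hτ0q : (ε * (n:ℝ)^(γ+ρ))^(-q) = ε^(-q) * (n:ℝ)^(-((γ+ρ)*q)) := by
      rw [Real.mul_rpow hε.le (Real.rpow_nonneg hn0.le _), ← Real.rpow_mul hn0.le,
        show (γ+ρ)*(-q) = -((γ+ρ)*q) by ring]
    have hne1 : (n:ℝ) * (n:ℝ)^(-((γ+ρ)*q)) = (n:ℝ)^(-e1) := by
      nth_rewrite 1 [← Real.rpow_one (n:ℝ)]
      rw [← Real.rpow_add hn0, show (1:ℝ) + -((γ+ρ)*q) = -e1 by simp only [he1]; ring]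
    have hne2 : (n:ℝ) * (n:ℝ)^(-(γ+ρ)) = (n:ℝ)^(-e2) := by
      nth_rewrite 1 [← Real.rpow_one (n:ℝ)]
      rw [← Real.rpow_add hn0, show (1:ℝ) + -(γ+ρ) = -e2 by simp only [he2]; ring]
    have hr1 : (n:ℝ) * (C * τ^(-q)) ≤ C * ε^(-q) * (n:ℝ)^(-e1) := by
      calc (n:ℝ) * (C * τ^(-q)) ≤ (n:ℝ) * (C * (ε^(-q) * (n:ℝ)^(-((γ+ρ)*q)))) := by
            apply mul_le_mul_of_nonneg_left _ hn0.le
            apply mul_le_mul_of_nonneg_left _ hCpos.le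
            rw [← hτ0q]; exact hτq
      _ = C * ε^(-q) * ((n:ℝ) * (n:ℝ)^(-((γ+ρ)*q))) := by ring
      _ = C * ε^(-q) * (n:ℝ)^(-e1) := by rw [hne1]
    have hdivτ : τ^(1-q)/τ = τ^(-q) := by
      have h := Real.rpow_sub hτpos (1-q) 1
      rw [Real.rpow_one] at h
      rw [← h, show (1:ℝ)-q-1 = -q by ring]
    have hr2 : (n:ℝ) * (M + C/(1-q) * τ^(1-q)) / τ
        ≤ (M/ε) * (n:ℝ)^(-e2) + (C/(1-q) * ε^(-q)) * (n:ℝ)^(-e1) := by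
      have hsplitr : (n:ℝ) * (M + C/(1-q) * τ^(1-q)) / τ
          = (n:ℝ) * M / τ + (C/(1-q)) * ((n:ℝ) * (τ^(1-q)/τ)) := by ring
      rw [hsplitr, hdivτ]
      have hA : (n:ℝ) * M / τ ≤ (M/ε) * (n:ℝ)^(-e2) := by
        calc (n:ℝ) * M / τ ≤ (n:ℝ) * M / (ε * (n:ℝ)^(γ+ρ)) :=
              div_le_div_of_nonneg_left (by positivity) hτ0p hτLB
        _ = (M/ε) * ((n:ℝ) * (n:ℝ)^(-(γ+ρ))) := by
              rw [Real.rpow_neg hn0.le]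
              field_simp
        _ = (M/ε) * (n:ℝ)^(-e2) := by rw [hne2]
      have hB : (C/(1-q)) * ((n:ℝ) * τ^(-q)) ≤ (C/(1-q) * ε^(-q)) * (n:ℝ)^(-e1) := by
        calc (C/(1-q)) * ((n:ℝ) * τ^(-q))
            ≤ (C/(1-q)) * ((n:ℝ) * (ε^(-q) * (n:ℝ)^(-((γ+ρ)*q)))) := by
              apply mul_le_mul_of_nonneg_left _ hCq
              apply mul_le_mul_of_nonneg_left _ hn0.le
              rw [← hτ0q]; exact hτq
        _ = (C/(1-q) * ε^(-q)) * ((n:ℝ) * (n:ℝ)^(-((γ+ρ)*q))) := by ring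
        _ = (C/(1-q) * ε^(-q)) * (n:ℝ)^(-e1) := by rw [hne1]
      exact add_le_add hA hB
    -- power comparison and conclusion
    have hp1 : (n:ℝ)^(-e1) ≤ (n:ℝ)^(-κ) :=
      Real.rpow_le_rpow_of_exponent_le hn1' (neg_le_neg (min_le_left _ _))
    have hp2 : (n:ℝ)^(-e2) ≤ (n:ℝ)^(-κ) :=
      Real.rpow_le_rpow_of_exponent_le hn1' (neg_le_neg (min_le_right _ _))
    have hfinal := ENNReal.toReal_le_of_le_ofReal (by linarith) hcomb
    calc (P {ω | ε < (n:ℝ) ^ (1-γ) * ‖(n:ℝ)⁻¹ • S n ω‖ / a n}).toReal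
        ≤ (n:ℝ) * (C * τ^(-q)) + (n:ℝ) * (M + C/(1-q) * τ^(1-q)) / τ := hfinal
    _ ≤ C * ε^(-q) * (n:ℝ)^(-e1) + ((M/ε) * (n:ℝ)^(-e2) + (C/(1-q) * ε^(-q)) * (n:ℝ)^(-e1)) :=
        add_le_add hr1 hr2
    _ ≤ C * ε^(-q) * (n:ℝ)^(-κ) + ((M/ε) * (n:ℝ)^(-κ) + (C/(1-q) * ε^(-q)) * (n:ℝ)^(-κ)) := by
        have h1 := mul_le_mul_of_nonneg_left hp1 (mul_nonneg hCpos.le hεq)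
        have h2 := mul_le_mul_of_nonneg_left hp2 (div_nonneg hM0.le hε.le)
        have h3 := mul_le_mul_of_nonneg_left hp1 (mul_nonneg hCq hεq)
        linarith
    _ = K * (n:ℝ)^(-κ) := by simp only [hKdef]; ring
  · -- case α > 1 : Markov with condition (2.4)
    -- integrability of X 0
    have hXint : Integrable (X 0) P := by
      set q : ℝ := α - (α-1)/2 with hqdef
      have hq1 : 1 < q := by simp only [hqdef]; linarith
      obtain ⟨C, hC, M, hM1, hub⟩ := tail_poly_upper hα
        (by linarith : (0:ℝ) < (α-1)/2) (by linarith : (α-1)/2 < α) hTpos hanti hlim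
      have hM0 : (0:ℝ) < M := lt_of_lt_of_le one_pos hM1
      refine ⟨(hmeas 0).aestronglyMeasurable, ?_⟩
      rw [hasFiniteIntegral_iff_norm,
        lintegral_eq_lintegral_meas_lt P
          (Filter.Eventually.of_forall (fun ω => norm_nonneg _)) (hmeas 0).norm.aemeasurable]
      have hsplit : Set.Ioi (0:ℝ) = Set.Ioc 0 M ∪ Set.Ioi M :=
        (Set.Ioc_union_Ioi_eq_Ioi hM0.le).symm
      rw [hsplit, lintegral_union measurableSet_Ioi (Set.Ioc_disjoint_Ioi le_rfl)]
      have h1 : ∫⁻ t in Set.Ioc (0:ℝ) M, P {ω | t < ‖X 0 ω‖} < ⊤ := by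
        calc ∫⁻ t in Set.Ioc (0:ℝ) M, P {ω | t < ‖X 0 ω‖}
            ≤ ∫⁻ _ in Set.Ioc (0:ℝ) M, 1 := lintegral_mono (fun t => prob_le_one)
        _ = ENNReal.ofReal M := by
            rw [setLIntegral_one, Real.volume_Ioc, sub_zero]
        _ < ⊤ := ENNReal.ofReal_lt_top
      have h2 : ∫⁻ t in Set.Ioi M, P {ω | t < ‖X 0 ω‖} < ⊤ := by
        have hInt : IntegrableOn (fun t : ℝ => C * t ^ (-q)) (Set.Ioi M) := by
          exact (integrableOn_Ioi_rpow_of_lt (by linarith : -q < -1) hM0).const_mul C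
        calc ∫⁻ t in Set.Ioi M, P {ω | t < ‖X 0 ω‖}
            ≤ ∫⁻ t in Set.Ioi M, ENNReal.ofReal (C * t ^ (-q)) := by
              have hm : Measurable (fun t : ℝ => t ^ (-q)) := measurable_id'.pow_const (-q)
              apply setLIntegral_mono
                (ENNReal.measurable_ofReal.comp (hm.const_mul C))
              intro t ht
              rw [hofT t]
              exact ENNReal.ofReal_le_ofReal (by
                have := hub t (le_of_lt ht)
                simpa only [hqdef] using this)
        _ < ⊤ := hInt.lintegral_lt_top
      exact ENNReal.add_lt_top.2 ⟨h1, h2⟩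
    have hXiint : ∀ i, Integrable (X i) P := by
      intro i
      have h0 : Integrable id (P.map (X 0)) :=
        (integrable_map_measure aestronglyMeasurable_id (hmeas 0).aemeasurable).2 hXint
      have h1 : Integrable id (P.map (X i)) := by rw [hident i]; exact h0
      exact (integrable_map_measure aestronglyMeasurable_id (hmeas i).aemeasurable).1 h1
    have hSint : ∀ n, Integrable (S n) P := by
      intro n
      have : S n = fun ω => ∑ i ∈ Finset.range n, X i ω := funext (hS n)
      rw [this]
      exact integrable_finset_sum _ (fun i _ => hXiint i)
    -- the common final argument
    have final : ∀ β C ρ : ℝ, 0 < β → 0 < ρ → ρ * α < 1 → 1/β - γ < ρ →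
        (∀ n : ℕ, 1 ≤ n → ∫ ω, ‖((n:ℝ) ^ (-(1/β))) • S n ω‖ ∂P ≤ C) →
        ∃ (K κ : ℝ), 0 ≤ K ∧ 0 < κ ∧ ∀ᶠ n : ℕ in atTop,
          (P {ω | ε < (n:ℝ) ^ (1-γ) * ‖(n:ℝ)⁻¹ • S n ω‖ / a n}).toReal ≤ K * (n:ℝ) ^ (-κ) := by
      intro β C ρ hβ hρ0 hρα hβρ hC
      have hC0 : 0 ≤ C := by
        have h1 := hC 1 le_rfl
        have h2 : 0 ≤ ∫ ω, ‖((1:ℕ):ℝ) ^ (-(1/β)) • S 1 ω‖ ∂P :=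
          integral_nonneg (fun ω => norm_nonneg _)
        linarith
      -- bound on E‖S n‖
      have hEb : ∀ n : ℕ, 1 ≤ n → ∫ ω, ‖S n ω‖ ∂P ≤ C * (n:ℝ) ^ (1/β) := by
        intro n hn
        have hn0 : (0:ℝ) < (n:ℝ) := by exact_mod_cast hn
        have hc0 : (0:ℝ) < (n:ℝ) ^ (-(1/β)) := Real.rpow_pos_of_pos hn0 _
        have h1 := hC n hn
        have h2 : ∫ ω, ‖((n:ℝ) ^ (-(1/β))) • S n ω‖ ∂P
            = (n:ℝ) ^ (-(1/β)) * ∫ ω, ‖S n ω‖ ∂P := by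
          simp_rw [norm_smul, Real.norm_eq_abs, abs_of_pos hc0]
          exact integral_const_mul _ _
        rw [h2] at h1
        have h3 : (n:ℝ) ^ (1/β) * ((n:ℝ) ^ (-(1/β)) * ∫ ω, ‖S n ω‖ ∂P)
            ≤ (n:ℝ) ^ (1/β) * C :=
          mul_le_mul_of_nonneg_left h1 (Real.rpow_pos_of_pos hn0 _).le
        have h4 : (n:ℝ) ^ (1/β) * (n:ℝ) ^ (-(1/β)) = 1 := by
          rw [← Real.rpow_add hn0]; simp
        calc ∫ ω, ‖S n ω‖ ∂P = ((n:ℝ) ^ (1/β) * (n:ℝ) ^ (-(1/β))) * ∫ ω, ‖S n ω‖ ∂P := by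
              rw [h4]; ring
        _ = (n:ℝ) ^ (1/β) * ((n:ℝ) ^ (-(1/β)) * ∫ ω, ‖S n ω‖ ∂P) := by ring
        _ ≤ (n:ℝ) ^ (1/β) * C := h3
        _ = C * (n:ℝ) ^ (1/β) := by ring
      set κ : ℝ := γ + ρ - 1/β with hκdef
      have hκ : 0 < κ := by simp only [hκdef]; linarith
      refine ⟨C/ε, κ, by positivity, hκ, ?_⟩
      filter_upwards [haLB ρ hρ0 hρα, Filter.eventually_ge_atTop 1] with n hLB hn1
      have hn0 : (0:ℝ) < (n:ℝ) := by exact_mod_cast hn1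
      have hnρ : (0:ℝ) < (n:ℝ) ^ ρ := Real.rpow_pos_of_pos hn0 _
      have han : 0 < a n := lt_of_lt_of_le hnρ hLB
      set τ : ℝ := ε * (n:ℝ) ^ γ * a n with hτdef
      have hτ : 0 < τ := by
        have := Real.rpow_pos_of_pos hn0 γ
        simp only [hτdef]; positivity
      have step1 : P {ω | ε < (n:ℝ) ^ (1-γ) * ‖(n:ℝ)⁻¹ • S n ω‖ / a n}
          ≤ ENNReal.ofReal (C * (n:ℝ) ^ (1/β) / τ) := by
        calc P {ω | ε < (n:ℝ) ^ (1-γ) * ‖(n:ℝ)⁻¹ • S n ω‖ / a n}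
            ≤ P {ω | τ < ‖S n ω‖} := measure_mono (hsub n hn1 han)
        _ ≤ (∫⁻ ω, ENNReal.ofReal ‖S n ω‖ ∂P) / ENNReal.ofReal τ :=
            markov (S n) (hSmeas n) τ hτ
        _ = ENNReal.ofReal (∫ ω, ‖S n ω‖ ∂P) / ENNReal.ofReal τ := by
            rw [ofReal_integral_eq_lintegral_ofReal (hSint n).norm
              (Filter.Eventually.of_forall (fun ω => norm_nonneg _))]
        _ ≤ ENNReal.ofReal (C * (n:ℝ) ^ (1/β)) / ENNReal.ofReal τ :=
            ENNReal.div_le_div_right (ENNReal.ofReal_le_ofReal (hEb n hn1)) _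
        _ = ENNReal.ofReal (C * (n:ℝ) ^ (1/β) / τ) :=
            (ENNReal.ofReal_div_of_pos hτ).symm
      have step2 : C * (n:ℝ) ^ (1/β) / τ ≤ (C/ε) * (n:ℝ) ^ (-κ) := by
        have hτLB : ε * (n:ℝ) ^ (γ + ρ) ≤ τ := by
          rw [Real.rpow_add hn0, hτdef]
          calc ε * ((n:ℝ) ^ γ * (n:ℝ) ^ ρ) ≤ ε * ((n:ℝ) ^ γ * a n) := by
                apply mul_le_mul_of_nonneg_left _ hε.le
                exact mul_le_mul_of_nonneg_left hLB (Real.rpow_pos_of_pos hn0 γ).le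
          _ = ε * (n:ℝ) ^ γ * a n := by ring
        have h5 : (0:ℝ) < ε * (n:ℝ) ^ (γ + ρ) := by
          have := Real.rpow_pos_of_pos hn0 (γ + ρ); positivity
        calc C * (n:ℝ) ^ (1/β) / τ ≤ C * (n:ℝ) ^ (1/β) / (ε * (n:ℝ) ^ (γ + ρ)) := by
              apply div_le_div_of_nonneg_left _ h5 hτLB
              positivity
        _ = (C/ε) * (n:ℝ) ^ (-κ) := by
              rw [hκdef, show -(γ + ρ - 1/β) = 1/β - (γ + ρ) by ring,
                Real.rpow_sub hn0]
              field_simp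
      have hnn : (0:ℝ) ≤ C * (n:ℝ) ^ (1/β) / τ :=
        div_nonneg (mul_nonneg hC0 (Real.rpow_nonneg hn0.le _)) hτ.le
      exact (ENNReal.toReal_le_of_le_ofReal hnn step1).trans step2
    rcases le_or_gt α 2 with hα2 | hα2
    · -- 1 < α ≤ 2
      have hβα : 1/(1/α + γ/2) < α := by
        rw [div_lt_iff₀ (by positivity)]
        have h1 : α * (1/α) = 1 := by field_simp
        nlinarith [mul_pos hα (half_pos hγ0)]
      obtain ⟨C, hC⟩ := hcond2 hα1 hα2 (1/(1/α + γ/2)) (by positivity) hβα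
      apply final (1/(1/α + γ/2)) C (1/α - γ/4) (by positivity) ?_ ?_ ?_ hC
      · have h2 : γ/4 < 1/2 := by linarith
        have h3 : (1:ℝ)/2 ≤ 1/α := by
          rw [div_le_div_iff₀ (by norm_num) hα]; linarith
        linarith
      · have h4 : (1/α - γ/4) * α < (1/α) * α := by
          apply mul_lt_mul_of_pos_right _ hα
          linarith
        have h5 : (1/α) * α = 1 := by field_simp
        linarith
      · rw [one_div_one_div]
        linarith
    · -- 2 < α
      obtain ⟨C, hC⟩ := hcond1 hα2
      have hmax : max (1/2 - γ) 0 < 1/α := by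
        rcases max_cases (1/2 - γ) (0:ℝ) with ⟨h1, h2⟩ | ⟨h1, h2⟩
        · rw [h1]
          have := (max_lt_iff.1 hγ).2
          linarith
        · rw [h1]; positivity
      set ρ : ℝ := (max (1/2 - γ) 0 + 1/α)/2 with hρdef
      have hρpos : 0 < ρ := by
        have := le_max_right (1/2 - γ) (0:ℝ)
        simp only [hρdef]
        have h0 : (0:ℝ) < 1/α := by positivity
        linarith
      apply final 2 C ρ two_pos hρpos ?_ ?_ ?_
      · have hρlt : ρ < 1/α := by simp only [hρdef]; linarith
        calc ρ * α < (1/α) * α := mul_lt_mul_of_pos_right hρlt hα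
        _ = 1 := by rw [one_div, inv_mul_cancel₀ hα.ne']
      · have := le_max_left (1/2 - γ) (0:ℝ)
        have h0 : (0:ℝ) < 1/α := by positivity
        simp only [hρdef]
        linarith
      · intro n hn
        have := hC n hn
        norm_num at this ⊢
        exact this
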